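/- Let Q be an NQPR in dimension d ≥ 2. For each j let λ_j^↑ (respectively λ_j^↓) denote the vector of eigenvalues of Q_j arranged in nondecreasing (respectively nonincreasing) order. Then min_{j,k} ∑_{i=1}^{d} λ_j^↑(i)·λ_k^↓(i) ≤ −1, and equality holds if and only if there exists a SIC Π_1, …, Π_{d²} such that either Q_j = √(d+1)·Π_j + ((1 − √(d+1))/d)·I for all j, or Q_j = −√(d+1)·Π_j + ((1 + √(d+1))/d)·I for all j. -/

import Mathlib

open Finset in
private lemma slack_peel (n : ℕ) (f : ℕ → ℝ) :
    (∑ i ∈ range (n+2), f i)^2 - ((n:ℝ)+1) * (∑ i ∈ range (n+2), f i * f (n+1-i))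
      - ∑ i ∈ range (n+2), f i^2
    = ((∑ i ∈ range n, f (i+1))^2 - ((n:ℝ)-1) * (∑ i ∈ range n, f (i+1) * f (n-i))
        - ∑ i ∈ range n, f (i+1)^2)
      + 2 * ∑ i ∈ range n, (f (i+1) - f 0) * (f (n+1) - f (n-i)) := by
  have hrefl : ∑ i ∈ range n, f (n - i) = ∑ i ∈ range n, f (i+1) := by
    rw [← Finset.sum_range_reflect]
    refine Finset.sum_congr rfl fun i hi => ?_
    congr 1
    have := Finset.mem_range.mp hi
    omega
  have h1 : ∑ i ∈ range (n+2), f i = f 0 + (∑ i ∈ range n, f (i+1)) + f (n+1) := by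
    rw [Finset.sum_range_succ, Finset.sum_range_succ']; ring
  have h2 : ∑ i ∈ range (n+2), f i * f (n+1-i)
      = f 0 * f (n+1) + (∑ i ∈ range n, f (i+1) * f (n-i)) + f (n+1) * f 0 := by
    rw [Finset.sum_range_succ, Finset.sum_range_succ']
    simp only [Nat.succ_sub_succ_eq_sub, Nat.sub_zero, Nat.sub_self]
    ring
  have h3 : ∑ i ∈ range (n+2), f i^2 = f 0^2 + (∑ i ∈ range n, f (i+1)^2) + f (n+1)^2 := by
    rw [Finset.sum_range_succ, Finset.sum_range_succ']; ring
  have hPT : ∑ i ∈ range n, (f (i+1) - f 0) * (f (n+1) - f (n-i))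
      = (∑ i ∈ range n, f (i+1)) * f (n+1) - (∑ i ∈ range n, f (i+1) * f (n-i))
        - (n:ℝ) * (f 0 * f (n+1)) + f 0 * (∑ i ∈ range n, f (i+1)) := by
    have expand : ∀ i ∈ range n, (f (i+1) - f 0) * (f (n+1) - f (n-i))
        = f (i+1) * f (n+1) - f (i+1) * f (n-i) - f 0 * f (n+1) + f 0 * f (n-i) := by
      intro i _; ring
    rw [Finset.sum_congr rfl expand]
    rw [Finset.sum_add_distrib, Finset.sum_sub_distrib, Finset.sum_sub_distrib,
      ← Finset.sum_mul, Finset.sum_const, ← Finset.mul_sum, hrefl, card_range,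
      nsmul_eq_mul]
  rw [h1, h2, h3, hPT]
  ring

open Finset in
private lemma key_ineq : ∀ (d : ℕ) (f : ℕ → ℝ), Monotone f →
    ((d:ℝ)-1) * (∑ i ∈ range d, f i * f (d-1-i)) + ∑ i ∈ range d, f i^2
      ≤ (∑ i ∈ range d, f i)^2 := by
  intro d
  induction d using Nat.strong_induction_on with
  | _ d ih =>
    match d with
    | 0 => intro f _; simp
    | 1 => intro f _; simp
    | (n+2) =>
      intro f hf
      have hIH := ih n (by omega) (fun i => f (i+1)) (fun a b hab => hf (by omega))
      have hPT : 0 ≤ ∑ i ∈ range n, (f (i+1) - f 0) * (f (n+1) - f (n-i)) := by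
        refine Finset.sum_nonneg fun i hi => mul_nonneg ?_ ?_
        · have := hf (Nat.zero_le (i+1)); linarith
        · have := hf (show n - i ≤ n + 1 by omega); linarith
      have hIH2 : ((n:ℝ) - 1) * (∑ x ∈ range n, f (x+1) * f (n - x)) + ∑ x ∈ range n, f (x+1)^2
          ≤ (∑ x ∈ range n, f (x+1))^2 := by
        have hre : ∑ x ∈ range n, f (x+1) * f (n - 1 - x + 1) = ∑ x ∈ range n, f (x+1) * f (n - x) :=
          Finset.sum_congr rfl fun i hi => by
            have := Finset.mem_range.mp hi
            congr 2
            omega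
        rw [← hre]; exact hIH
      have hpeel := slack_peel n f
      have hcast : ((n+2:ℕ):ℝ) - 1 = (n:ℝ) + 1 := by push_cast; ring
      have hidx : (n+2) - 1 = n+1 := rfl
      rw [hidx] at *
      rw [hcast]
      linarith

open Finset in
private lemma key_eq (n : ℕ) (hn : 1 ≤ n) (f : ℕ → ℝ) (hf : Monotone f)
    (heq : ((n:ℝ)+1) * (∑ i ∈ range (n+2), f i * f (n+1-i)) + ∑ i ∈ range (n+2), f i^2
      = (∑ i ∈ range (n+2), f i)^2) :
    (f n - f 0) * (f (n+1) - f 1) = 0 := by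
  have hIH := key_ineq n (fun i => f (i+1)) (fun a b hab => hf (by omega))
  have hIH2 : ((n:ℝ) - 1) * (∑ x ∈ range n, f (x+1) * f (n - x)) + ∑ x ∈ range n, f (x+1)^2
      ≤ (∑ x ∈ range n, f (x+1))^2 := by
    have hre : ∑ x ∈ range n, f (x+1) * f (n - 1 - x + 1) = ∑ x ∈ range n, f (x+1) * f (n - x) :=
      Finset.sum_congr rfl fun i hi => by
        have := Finset.mem_range.mp hi
        congr 2
        omega
    rw [← hre]; exact hIH
  have hpeel := slack_peel n f
  have hterm : ∀ i ∈ range n, 0 ≤ (f (i+1) - f 0) * (f (n+1) - f (n-i)) := by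
    intro i hi
    refine mul_nonneg ?_ ?_
    · have := hf (Nat.zero_le (i+1)); linarith
    · have := hf (show n - i ≤ n + 1 by omega); linarith
  have hPTzero : ∑ i ∈ range n, (f (i+1) - f 0) * (f (n+1) - f (n-i)) = 0 := by
    have h0 : 0 ≤ ∑ i ∈ range n, (f (i+1) - f 0) * (f (n+1) - f (n-i)) :=
      Finset.sum_nonneg hterm
    linarith
  have := (Finset.sum_eq_zero_iff_of_nonneg hterm).mp hPTzero (n-1)
    (Finset.mem_range.mpr (by omega))
  have e1 : n - 1 + 1 = n := by omega
  have e2 : n - (n-1) = 1 := by omega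
  rw [e1, e2] at this
  exact this

/-- The components of `v` rearranged in nondecreasing order. -/
noncomputable def sortedAsc {d : ℕ} (v : Fin d → ℝ) : Fin d → ℝ :=
  v ∘ Tuple.sort v

/-- The components of `v` rearranged in nonincreasing order. -/
noncomputable def sortedDesc {d : ℕ} (v : Fin d → ℝ) : Fin d → ℝ :=
  fun i => sortedAsc v i.rev

namespace Stmt8

variable {n : Type*} [Fintype n] [DecidableEq n] {A : Matrix n n ℂ}

open Matrix

private lemma unitary_mul_star (hA : A.IsHermitian) :
    (hA.eigenvectorUnitary : Matrix n n ℂ) * star (hA.eigenvectorUnitary : Matrix n n ℂ) = 1 :=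
  (Matrix.mem_unitaryGroup_iff).mp (hA.eigenvectorUnitary).2

private lemma star_mul_unitary (hA : A.IsHermitian) :
    star (hA.eigenvectorUnitary : Matrix n n ℂ) * (hA.eigenvectorUnitary : Matrix n n ℂ) = 1 :=
  (Matrix.mem_unitaryGroup_iff').mp (hA.eigenvectorUnitary).2

private lemma star_mul_self_mul_eq_diagonal' (hA : A.IsHermitian) :
    star (hA.eigenvectorUnitary : Matrix n n ℂ) * A * (hA.eigenvectorUnitary : Matrix n n ℂ)
      = Matrix.diagonal (RCLike.ofReal ∘ hA.eigenvalues) := by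
  have h := hA.conjStarAlgAut_star_eigenvectorUnitary
  rw [Unitary.conjStarAlgAut_apply] at h
  simpa using h

private lemma trace_eq_sum_eigen (hA : A.IsHermitian) :
    A.trace = ∑ i, (hA.eigenvalues i : ℂ) := by
  conv_lhs => rw [hA.spectral_theorem, Unitary.conjStarAlgAut_apply]
  rw [Matrix.trace_mul_cycle, star_mul_unitary hA, Matrix.one_mul, Matrix.trace_diagonal]
  rfl

private lemma star_mul_sq_mul (hA : A.IsHermitian) :
    Matrix.diagonal (RCLike.ofReal ∘ hA.eigenvalues) * Matrix.diagonal (RCLike.ofReal ∘ hA.eigenvalues)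
      = star (hA.eigenvectorUnitary : Matrix n n ℂ) * (A * A) * (hA.eigenvectorUnitary : Matrix n n ℂ) := by
  rw [← star_mul_self_mul_eq_diagonal' hA]
  have h1 : (star (hA.eigenvectorUnitary : Matrix n n ℂ) * A * (hA.eigenvectorUnitary : Matrix n n ℂ))
      * (star (hA.eigenvectorUnitary : Matrix n n ℂ) * A * (hA.eigenvectorUnitary : Matrix n n ℂ))
      = star (hA.eigenvectorUnitary : Matrix n n ℂ) * A *
        ((hA.eigenvectorUnitary : Matrix n n ℂ) * star (hA.eigenvectorUnitary : Matrix n n ℂ)) *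
        A * (hA.eigenvectorUnitary : Matrix n n ℂ) := by
    noncomm_ring
  rw [h1, unitary_mul_star hA, Matrix.mul_one]
  noncomm_ring

private lemma trace_sq_eq_sum_eigen_sq (hA : A.IsHermitian) :
    (A * A).trace = ∑ i, ((hA.eigenvalues i ^ 2 : ℝ) : ℂ) := by
  have h := star_mul_sq_mul hA
  have : (A * A).trace = (star (hA.eigenvectorUnitary : Matrix n n ℂ) * (A * A) *
      (hA.eigenvectorUnitary : Matrix n n ℂ)).trace := by
    rw [Matrix.trace_mul_cycle, ← Matrix.mul_assoc, unitary_mul_star hA, Matrix.one_mul]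
  rw [this, ← h, Matrix.diagonal_mul_diagonal, Matrix.trace_diagonal]
  refine Finset.sum_congr rfl fun i _ => ?_
  simp [sq]

private lemma eigen_quadratic (hA : A.IsHermitian) {a b : ℝ}
    (h : A * A = (a : ℂ) • A + (b : ℂ) • (1 : Matrix n n ℂ)) (i : n) :
    hA.eigenvalues i ^ 2 = a * hA.eigenvalues i + b := by
  have hDD := star_mul_sq_mul hA
  rw [h] at hDD
  rw [Matrix.mul_add, Matrix.add_mul] at hDD
  rw [Matrix.mul_smul, Matrix.smul_mul, Matrix.mul_smul, Matrix.smul_mul, Matrix.mul_one,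
    star_mul_self_mul_eq_diagonal' hA, star_mul_unitary hA] at hDD
  have hii := congr_fun (congr_fun hDD i) i
  simp only [Matrix.diagonal_mul_diagonal, Matrix.diagonal_apply_eq, Matrix.add_apply,
    Matrix.smul_apply, Matrix.one_apply_eq, Function.comp_apply, smul_eq_mul, mul_one] at hii
  have : ((hA.eigenvalues i ^ 2 : ℝ) : ℂ) = ((a * hA.eigenvalues i + b : ℝ) : ℂ) := by
    push_cast
    rw [sq]
    exact hii
  exact_mod_cast this

private lemma quadratic_of_eigen (hA : A.IsHermitian) {a b : ℝ}
    (h : ∀ i, hA.eigenvalues i ^ 2 = a * hA.eigenvalues i + b) :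
    A * A = (a : ℂ) • A + (b : ℂ) • (1 : Matrix n n ℂ) := by
  have hDD : Matrix.diagonal (RCLike.ofReal ∘ hA.eigenvalues) *
      Matrix.diagonal (RCLike.ofReal ∘ hA.eigenvalues)
      = (a : ℂ) • Matrix.diagonal (RCLike.ofReal ∘ hA.eigenvalues)
        + (b : ℂ) • (1 : Matrix n n ℂ) := by
    ext i j
    by_cases hij : i = j
    · subst hij
      simp only [Matrix.diagonal_mul_diagonal, Matrix.diagonal_apply_eq, Matrix.add_apply,
        Matrix.smul_apply, Matrix.one_apply_eq, Function.comp_apply, Pi.mul_apply,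
        smul_eq_mul, mul_one]
      have hc : ((hA.eigenvalues i ^ 2 : ℝ) : ℂ) = ((a * hA.eigenvalues i + b : ℝ) : ℂ) := by
        exact_mod_cast congrArg (fun x : ℝ => (x : ℂ)) (h i)
      push_cast at hc
      rw [← sq]
      exact hc
    · simp only [Matrix.diagonal_mul_diagonal, Matrix.add_apply, Matrix.smul_apply,
        Matrix.diagonal_apply_ne _ hij, Matrix.one_apply_ne hij, smul_eq_mul, mul_zero,
        add_zero, Pi.mul_apply]
  have hspec := hA.spectral_theorem
  rw [Unitary.conjStarAlgAut_apply] at hspec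
  calc A * A = (hA.eigenvectorUnitary : Matrix n n ℂ) *
        (Matrix.diagonal (RCLike.ofReal ∘ hA.eigenvalues) *
          Matrix.diagonal (RCLike.ofReal ∘ hA.eigenvalues)) *
        star (hA.eigenvectorUnitary : Matrix n n ℂ) := by
        rw [star_mul_sq_mul hA]
        have hx : (hA.eigenvectorUnitary : Matrix n n ℂ) *
            (star (hA.eigenvectorUnitary : Matrix n n ℂ) * (A * A) *
              (hA.eigenvectorUnitary : Matrix n n ℂ)) *
            star (hA.eigenvectorUnitary : Matrix n n ℂ)
            = ((hA.eigenvectorUnitary : Matrix n n ℂ) * star (hA.eigenvectorUnitary : Matrix n n ℂ))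
              * (A * A) *
              ((hA.eigenvectorUnitary : Matrix n n ℂ) * star (hA.eigenvectorUnitary : Matrix n n ℂ)) := by
          noncomm_ring
        rw [hx, unitary_mul_star hA, Matrix.one_mul, Matrix.mul_one]
    _ = (a : ℂ) • A + (b : ℂ) • 1 := by
        rw [hDD, Matrix.mul_add, Matrix.add_mul, Matrix.mul_smul, Matrix.smul_mul,
          Matrix.mul_smul, Matrix.smul_mul, Matrix.mul_one, unitary_mul_star hA, ← hspec]




private lemma sortedAsc_monotone {d : ℕ} (v : Fin d → ℝ) : Monotone (sortedAsc v) :=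
  Tuple.monotone_sort v

private lemma sum_sortedAsc {d : ℕ} (v : Fin d → ℝ) : ∑ i, sortedAsc v i = ∑ i, v i :=
  Equiv.sum_comp (Tuple.sort v) v

private lemma sum_sq_sortedAsc {d : ℕ} (v : Fin d → ℝ) :
    ∑ i, (sortedAsc v i)^2 = ∑ i, (v i)^2 :=
  Equiv.sum_comp (Tuple.sort v) (fun i => (v i)^2)

private lemma exists_sortedAsc_eq {d : ℕ} (v : Fin d → ℝ) (j : Fin d) :
    ∃ i, v j = sortedAsc v i :=
  ⟨(Tuple.sort v).symm j, by simp [sortedAsc]⟩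

/-- A vector with one entry `b` and the rest `c ≤ b` sorts to `(c,…,c,b)`. -/
private lemma sortedAsc_pattern_high {d : ℕ} (hd : 1 ≤ d) (v : Fin d → ℝ) {b c : ℝ}
    (hcb : c ≤ b) (i₀ : Fin d) (hb : v i₀ = b) (hc : ∀ i, i ≠ i₀ → v i = c) :
    sortedAsc v = fun i : Fin d => if (i : ℕ) = d - 1 then b else c := by
  have hlast : d - 1 < d := by omega
  set L : Fin d := ⟨d - 1, hlast⟩ with hL
  set σ : Equiv.Perm (Fin d) := Equiv.swap i₀ L with hσ
  have hcomp : v ∘ σ = fun i : Fin d => if (i : ℕ) = d - 1 then b else c := by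
    funext i
    by_cases hiL : i = L
    · subst hiL
      simp only [Function.comp_apply, hσ, Equiv.swap_apply_right, hb]
      simp [hL]
    · have hval : (i : ℕ) ≠ d - 1 := fun h => hiL (Fin.ext h)
      rw [if_neg hval]
      by_cases hii : i = i₀
      · subst hii
        simp only [Function.comp_apply, hσ, Equiv.swap_apply_left]
        exact hc L (fun h => hiL h.symm)
      · simp only [Function.comp_apply, hσ, Equiv.swap_apply_of_ne_of_ne hii hiL]
        exact hc i hii
  have hmono : Monotone (v ∘ σ) := by
    rw [hcomp]
    intro x y hxy
    by_cases hx : (x : ℕ) = d - 1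
    · have hy : (y : ℕ) = d - 1 := by
        have := Fin.le_iff_val_le_val.mp hxy
        have := y.isLt
        omega
      simp [hx, hy]
    · by_cases hy : (y : ℕ) = d - 1 <;> simp [hx, hy, hcb]
  have := (Tuple.comp_sort_eq_comp_iff_monotone (f := v) (σ := σ)).mpr hmono
  show v ∘ Tuple.sort v = _
  rw [← this, hcomp]

/-- A vector with one entry `b` and the rest `c ≥ b` sorts to `(b,c,…,c)`. -/
private lemma sortedAsc_pattern_low {d : ℕ} (hd : 1 ≤ d) (v : Fin d → ℝ) {b c : ℝ}
    (hcb : b ≤ c) (i₀ : Fin d) (hb : v i₀ = b) (hc : ∀ i, i ≠ i₀ → v i = c) :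
    sortedAsc v = fun i : Fin d => if (i : ℕ) = 0 then b else c := by
  have h0 : 0 < d := by omega
  set Z : Fin d := ⟨0, h0⟩ with hZ
  set σ : Equiv.Perm (Fin d) := Equiv.swap i₀ Z with hσ
  have hcomp : v ∘ σ = fun i : Fin d => if (i : ℕ) = 0 then b else c := by
    funext i
    by_cases hiZ : i = Z
    · subst hiZ
      simp only [Function.comp_apply, hσ, Equiv.swap_apply_right, hb]
      simp [hZ]
    · have hval : (i : ℕ) ≠ 0 := fun h => hiZ (Fin.ext h)
      rw [if_neg hval]
      by_cases hii : i = i₀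
      · subst hii
        simp only [Function.comp_apply, hσ, Equiv.swap_apply_left]
        exact hc Z (fun h => hiZ h.symm)
      · simp only [Function.comp_apply, hσ, Equiv.swap_apply_of_ne_of_ne hii hiZ]
        exact hc i hii
  have hmono : Monotone (v ∘ σ) := by
    rw [hcomp]
    intro x y hxy
    by_cases hy : (y : ℕ) = 0
    · have hx : (x : ℕ) = 0 := by
        have := Fin.le_iff_val_le_val.mp hxy
        omega
      simp [hx, hy]
    · by_cases hx : (x : ℕ) = 0 <;> simp [hx, hy, hcb]
  have := (Tuple.comp_sort_eq_comp_iff_monotone (f := v) (σ := σ)).mpr hmono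
  show v ∘ Tuple.sort v = _
  rw [← this, hcomp]

/-- Counting lemma: values in `{c, c+t}`, sum `d·c + t`, `t ≠ 0` gives a unique outlier. -/
private lemma unique_outlier {d : ℕ} (v : Fin d → ℝ) {c t : ℝ} (ht : t ≠ 0)
    (hvals : ∀ i, v i = c ∨ v i = c + t) (hsum : ∑ i, v i = d * c + t) :
    ∃ i₀, v i₀ = c + t ∧ ∀ i, i ≠ i₀ → v i = c := by
  classical
  set s : Finset (Fin d) := Finset.univ.filter (fun i => v i = c + t) with hs
  have hsplit : ∑ i, v i = (s.card : ℝ) * (c + t) + ((d : ℝ) - s.card) * c := by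
    rw [← Finset.sum_filter_add_sum_filter_not Finset.univ (fun i => v i = c + t) v]
    have h1 : ∑ i ∈ Finset.univ.filter (fun i => v i = c + t), v i = (s.card : ℝ) * (c + t) := by
      rw [Finset.sum_congr rfl (fun i hi => (Finset.mem_filter.mp hi).2), Finset.sum_const,
        nsmul_eq_mul]
    have h2 : ∑ i ∈ Finset.univ.filter (fun i => ¬(v i = c + t)), v i
        = ((d : ℝ) - s.card) * c := by
      rw [Finset.sum_congr rfl (fun i hi => ((hvals i).resolve_right
        (Finset.mem_filter.mp hi).2)), Finset.sum_const, nsmul_eq_mul]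
      congr 1
      have htot := Finset.card_filter_add_card_filter_not (s := Finset.univ)
        (p := fun i => v i = c + t)
      simp only [Finset.card_univ, Fintype.card_fin] at htot
      have hcard : (Finset.univ.filter (fun i => ¬(v i = c + t))).card = d - s.card := by
        rw [hs]
        omega
      rw [hcard]
      have hle : s.card ≤ d := by
        have := Finset.card_filter_le Finset.univ (fun i => v i = c + t)
        simpa using this
      push_cast [Nat.cast_sub hle]
      ring
    rw [h1, h2]
  rw [hsum] at hsplit
  have hk : (s.card : ℝ) = 1 := by
    have : ((s.card : ℝ) - 1) * t = 0 := by linarith [hsplit]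
    rcases mul_eq_zero.mp this with h | h
    · linarith
    · exact absurd h ht
  have hcard1 : s.card = 1 := by exact_mod_cast hk
  obtain ⟨i₀, hi₀⟩ := Finset.card_eq_one.mp hcard1
  refine ⟨i₀, ?_, ?_⟩
  · have : i₀ ∈ s := hi₀ ▸ Finset.mem_singleton_self i₀
    exact (Finset.mem_filter.mp this).2
  · intro i hi
    have : i ∉ s := fun h => hi (by simpa [hi₀] using h)
    have hns : ¬(v i = c + t) := fun h => this (Finset.mem_filter.mpr ⟨Finset.mem_univ i, h⟩)
    exact (hvals i).resolve_right hns


private lemma sum_if_pattern {d : ℕ} (a₁ a₂ : Fin d) (hne : a₁ ≠ a₂) (b c b' c' : ℝ) :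
    ∑ i : Fin d, (if i = a₁ then b else c) * (if i = a₂ then b' else c')
      = (d:ℝ)*(c*c') + (b-c)*c' + c*(b'-c') := by
  have hterm : ∀ i : Fin d, (if i = a₁ then b else c) * (if i = a₂ then b' else c')
      = c*c' + ((if i = a₁ then (b-c)*c' else 0) + (if i = a₂ then c*(b'-c') else 0)) := by
    intro i
    by_cases h1 : i = a₁
    · subst h1
      simp only [if_pos rfl, if_neg hne, if_true]
      ring
    · by_cases h2 : i = a₂
      · simp only [if_neg h1, if_pos h2]
        ring
      · simp only [if_neg h1, if_neg h2]
        ring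
  rw [Finset.sum_congr rfl (fun i _ => hterm i), Finset.sum_add_distrib, Finset.sum_add_distrib,
    Finset.sum_const, Finset.sum_ite_eq' Finset.univ a₁ (fun _ => (b-c)*c'),
    Finset.sum_ite_eq' Finset.univ a₂ (fun _ => c*(b'-c'))]
  simp only [Finset.mem_univ, if_pos, Finset.card_univ, Fintype.card_fin, nsmul_eq_mul, if_true]
  ring

private lemma sum_if_pattern_same {d : ℕ} (a : Fin d) (b c b' c' : ℝ) :
    ∑ i : Fin d, (if i = a then b else c) * (if i = a then b' else c')
      = (d:ℝ)*(c*c') + (b*b' - c*c') := by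
  have hterm : ∀ i : Fin d, (if i = a then b else c) * (if i = a then b' else c')
      = c*c' + (if i = a then b*b' - c*c' else 0) := by
    intro i
    by_cases h1 : i = a
    · simp only [if_pos h1]; ring
    · simp only [if_neg h1]; ring
  rw [Finset.sum_congr rfl (fun i _ => hterm i), Finset.sum_add_distrib,
    Finset.sum_const, Finset.sum_ite_eq' Finset.univ a (fun _ => b*b' - c*c')]
  simp only [Finset.mem_univ, if_pos, Finset.card_univ, Fintype.card_fin, nsmul_eq_mul, if_true]

section Diag
variable {d : ℕ}

private noncomputable def clampF (hd : 2 ≤ d) (v : Fin d → ℝ) : ℕ → ℝ :=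
  fun m => sortedAsc v ⟨min m (d-1), by omega⟩

private lemma clampF_mono (hd : 2 ≤ d) (v : Fin d → ℝ) : Monotone (clampF hd v) := by
  intro a b hab
  exact sortedAsc_monotone v (by simp [Fin.mk_le_mk]; omega)

private lemma clampF_val (hd : 2 ≤ d) (v : Fin d → ℝ) (i : Fin d) :
    clampF hd v (i : ℕ) = sortedAsc v i := by
  unfold clampF
  congr 1
  exact Fin.ext (by simp; omega)

private lemma clampF_sum (hd : 2 ≤ d) (v : Fin d → ℝ) :
    ∑ i ∈ Finset.range d, clampF hd v i = ∑ i, v i := by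
  rw [← Fin.sum_univ_eq_sum_range (fun m => clampF hd v m) d, ← sum_sortedAsc v]
  exact Finset.sum_congr rfl fun i _ => clampF_val hd v i

private lemma clampF_sq_sum (hd : 2 ≤ d) (v : Fin d → ℝ) :
    ∑ i ∈ Finset.range d, (clampF hd v i)^2 = ∑ i, (v i)^2 := by
  rw [← Fin.sum_univ_eq_sum_range (fun m => (clampF hd v m)^2) d, ← sum_sq_sortedAsc v]
  exact Finset.sum_congr rfl fun i _ => by rw [clampF_val hd v i]

private lemma clampF_G (hd : 2 ≤ d) (v : Fin d → ℝ) :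
    ∑ i ∈ Finset.range d, clampF hd v i * clampF hd v (d-1-i)
    = ∑ i, sortedAsc v i * sortedDesc v i := by
  rw [← Fin.sum_univ_eq_sum_range (fun m => clampF hd v m * clampF hd v (d-1-m)) d]
  refine Finset.sum_congr rfl fun i _ => ?_
  rw [clampF_val hd v i]
  congr 1
  show clampF hd v (d-1-(i:ℕ)) = sortedAsc v i.rev
  unfold clampF
  congr 1
  refine Fin.ext ?_
  simp only [Fin.val_rev]
  omega

private lemma diag_le (hd : 2 ≤ d) (v : Fin d → ℝ) (hsum : ∑ i, v i = 1) (hsq : ∑ i, (v i)^2 = (d:ℝ)) :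
    ∑ i, sortedAsc v i * sortedDesc v i ≤ -1 := by
  have hkey := key_ineq d (clampF hd v) (clampF_mono hd v)
  rw [clampF_sum hd v, clampF_sq_sum hd v, clampF_G hd v, hsum, hsq] at hkey
  have hd1 : (1:ℝ) ≤ (d:ℝ) - 1 := by
    have : (2:ℝ) ≤ (d:ℝ) := by exact_mod_cast hd
    linarith
  nlinarith [hkey]


private lemma sum_split_one {d : ℕ} (f : Fin d → ℝ) (a : Fin d) (c : ℝ)
    (hother : ∀ i, i ≠ a → f i = c) :
    ∑ i, f i = ((d:ℝ)-1)*c + f a := by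
  have hL : a ∈ Finset.univ := Finset.mem_univ a
  have hd1 : 1 ≤ d := a.pos
  have h1 : ∑ i ∈ Finset.univ.erase a, f i = ((d:ℝ)-1)*c := by
    rw [Finset.sum_congr rfl (fun i hi => hother i (Finset.mem_erase.mp hi).1),
      Finset.sum_const, Finset.card_erase_of_mem hL, Finset.card_univ, Fintype.card_fin,
      nsmul_eq_mul]
    push_cast [Nat.cast_sub hd1]
    ring
  rw [← Finset.sum_erase_add Finset.univ f hL, h1]

private lemma diag_eq_pattern {d : ℕ} (hd : 2 ≤ d) (v : Fin d → ℝ)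
    (hsum : ∑ i, v i = 1) (hsq : ∑ i, (v i)^2 = (d:ℝ))
    (heq : ∑ i, sortedAsc v i * sortedDesc v i = -1) :
    (sortedAsc v = fun i : Fin d => if (i:ℕ) = d - 1
        then (1 - Real.sqrt (d+1))/d + Real.sqrt (d+1) else (1 - Real.sqrt (d+1))/d)
    ∨ (sortedAsc v = fun i : Fin d => if (i:ℕ) = 0
        then (1 + Real.sqrt (d+1))/d - Real.sqrt (d+1) else (1 + Real.sqrt (d+1))/d) := by
  have hdR : (2:ℝ) ≤ (d:ℝ) := by exact_mod_cast hd
  have hd0 : (d:ℝ) ≠ 0 := by linarith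
  set t : ℝ := Real.sqrt (d+1) with htdef
  have ht2 : t^2 = (d:ℝ)+1 := Real.sq_sqrt (by positivity)
  have ht0 : 0 < t := Real.sqrt_pos.mpr (by positivity)
  -- step 1 : the two-point alternative
  have hOR : sortedAsc v ⟨d-2, by omega⟩ = sortedAsc v ⟨0, by omega⟩ ∨
      sortedAsc v ⟨d-1, by omega⟩ = sortedAsc v ⟨1, by omega⟩ := by
    by_cases hd2 : d = 2
    · subst hd2
      left
      rfl
    · -- d ≥ 3, use key_eq
      have hd3 : 3 ≤ d := by omega
      obtain ⟨n, hn⟩ : ∃ n, d = n + 2 := ⟨d - 2, by omega⟩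
      have hG := clampF_G hd v
      have hT := clampF_sum hd v
      have hS := clampF_sq_sum hd v
      rw [hsum] at hT
      rw [hsq] at hS
      rw [heq] at hG
      have heqR : ((n:ℝ)+1) * (∑ i ∈ Finset.range (n+2), clampF hd v i * clampF hd v (n+1-i))
          + ∑ i ∈ Finset.range (n+2), (clampF hd v i)^2
          = (∑ i ∈ Finset.range (n+2), clampF hd v i)^2 := by
        have hGn : ∑ i ∈ Finset.range (n+2), clampF hd v i * clampF hd v (n+1-i) = -1 := by
          rw [← hG, ← hn]
          exact Finset.sum_congr rfl fun i hi => by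
            congr 2
            omega
        have hSn : ∑ i ∈ Finset.range (n+2), (clampF hd v i)^2 = (d:ℝ) := by rw [← hn]; exact hS
        have hTn : ∑ i ∈ Finset.range (n+2), clampF hd v i = 1 := by rw [← hn]; exact hT
        rw [hGn, hSn, hTn]
        have : (d:ℝ) = (n:ℝ) + 2 := by rw [hn]; push_cast; ring
        rw [this]; ring
      have hker := key_eq n (by omega) (clampF hd v) (clampF_mono hd v) heqR
      rcases mul_eq_zero.mp hker with h | h
      · left
        have h' : clampF hd v n = clampF hd v 0 := by linarith [sub_eq_zero.mp h]
        have e1 : clampF hd v n = sortedAsc v ⟨d-2, by omega⟩ := by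
          have := clampF_val hd v ⟨d-2, by omega⟩
          simpa [show d - 2 = n by omega] using this
        have e2 : clampF hd v 0 = sortedAsc v ⟨0, by omega⟩ := clampF_val hd v ⟨0, by omega⟩
        rw [← e1, ← e2, h']
      · right
        have h' : clampF hd v (n+1) = clampF hd v 1 := by linarith [sub_eq_zero.mp h]
        have e1 : clampF hd v (n+1) = sortedAsc v ⟨d-1, by omega⟩ := by
          have := clampF_val hd v ⟨d-1, by omega⟩
          simpa [show d - 1 = n + 1 by omega] using this
        have e2 : clampF hd v 1 = sortedAsc v ⟨1, by omega⟩ := clampF_val hd v ⟨1, by omega⟩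
        rw [← e1, ← e2, h']
  -- step 2 : case analysis
  have hsumS : ∑ i, sortedAsc v i = 1 := by rw [sum_sortedAsc, hsum]
  have hsqS : ∑ i, (sortedAsc v i)^2 = (d:ℝ) := by rw [sum_sq_sortedAsc, hsq]
  rcases hOR with h | h
  · -- high-outlier pattern
    left
    set c : ℝ := sortedAsc v ⟨0, by omega⟩ with hcdef
    set y : ℝ := sortedAsc v ⟨d-1, by omega⟩ with hydef
    have hall : ∀ i : Fin d, (i:ℕ) ≤ d-2 → sortedAsc v i = c := by
      intro i hi
      refine le_antisymm ?_ ?_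
      · rw [← h]
        exact sortedAsc_monotone v (by simp only [Fin.le_def]; omega)
      · exact sortedAsc_monotone v (by simp only [Fin.le_def]; omega)
    have hsum1 : ((d:ℝ)-1)*c + y = 1 := by
      have hs := sum_split_one (fun i => sortedAsc v i) ⟨d-1, by omega⟩ c
        (fun i hi => hall i (by
          have : (i:ℕ) ≠ d - 1 := fun hh => hi (Fin.ext hh)
          have := i.isLt
          omega))
      have h2 := hs.symm.trans hsumS
      simpa using h2
    have hsq1 : ((d:ℝ)-1)*c^2 + y^2 = (d:ℝ) := by
      have hs := sum_split_one (fun i => (sortedAsc v i)^2) ⟨d-1, by omega⟩ (c^2)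
        (fun i hi => by
          show sortedAsc v i ^ 2 = c ^ 2
          rw [hall i (by
            have : (i:ℕ) ≠ d - 1 := fun hh => hi (Fin.ext hh)
            have := i.isLt
            omega)])
      have h2 := hs.symm.trans hsqS
      simpa using h2
    have hcy : c ≤ y := sortedAsc_monotone v (by simp only [Fin.le_def]; omega)
    have e1 : y = 1 - ((d:ℝ)-1)*c := by linarith
    rw [e1] at hsq1
    have hfac : ((d:ℝ)-1) * ((d:ℝ)*c^2 - 2*c - 1) = 0 := by linear_combination hsq1
    have hq : (d:ℝ)*c^2 - 2*c - 1 = 0 :=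
      (mul_eq_zero.mp hfac).resolve_left (by intro hcon; linarith)
    have hsq2 : ((d:ℝ)*c - 1)^2 = t^2 := by linear_combination (d:ℝ)*hq - ht2
    have hfac2 : ((d:ℝ)*c - 1 + t)*((d:ℝ)*c - 1 - t) = 0 := by linear_combination hsq2
    have hdcle : (d:ℝ)*c ≤ 1 := by nlinarith [hcy, hsum1]
    have hc : (d:ℝ)*c = 1 - t := by
      rcases mul_eq_zero.mp hfac2 with h' | h'
      · linarith
      · linarith
    have hcval : c = (1-t)/d := by field_simp; linarith
    have hyval : y = (1-t)/d + t := by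
      rw [← hcval]
      linarith [e1, hc]
    funext i
    by_cases hi : (i:ℕ) = d - 1
    · rw [if_pos hi]
      have : i = (⟨d-1, by omega⟩ : Fin d) := Fin.ext hi
      rw [this, ← hydef, hyval]
    · rw [if_neg hi]
      have hile : (i:ℕ) ≤ d - 2 := by have := i.isLt; omega
      rw [hall i hile, hcval]
  · -- low-outlier pattern
    right
    set c : ℝ := sortedAsc v ⟨d-1, by omega⟩ with hcdef
    set x : ℝ := sortedAsc v ⟨0, by omega⟩ with hxdef
    have hall : ∀ i : Fin d, 1 ≤ (i:ℕ) → sortedAsc v i = c := by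
      intro i hi
      refine le_antisymm ?_ ?_
      · exact sortedAsc_monotone v (by simp only [Fin.le_def]; omega)
      · rw [h]
        exact sortedAsc_monotone v (by simp only [Fin.le_def]; omega)
    have hsum1 : ((d:ℝ)-1)*c + x = 1 := by
      have hs := sum_split_one (fun i => sortedAsc v i) ⟨0, by omega⟩ c
        (fun i hi => hall i (by
          have : (i:ℕ) ≠ 0 := fun hh => hi (Fin.ext hh)
          omega))
      have h2 := hs.symm.trans hsumS
      simpa using h2
    have hsq1 : ((d:ℝ)-1)*c^2 + x^2 = (d:ℝ) := by
      have hs := sum_split_one (fun i => (sortedAsc v i)^2) ⟨0, by omega⟩ (c^2)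
        (fun i hi => by
          show sortedAsc v i ^ 2 = c ^ 2
          rw [hall i (by
            have : (i:ℕ) ≠ 0 := fun hh => hi (Fin.ext hh)
            omega)])
      have h2 := hs.symm.trans hsqS
      simpa using h2
    have hxc : x ≤ c := sortedAsc_monotone v (by simp only [Fin.le_def]; omega)
    have e1 : x = 1 - ((d:ℝ)-1)*c := by linarith
    rw [e1] at hsq1
    have hfac : ((d:ℝ)-1) * ((d:ℝ)*c^2 - 2*c - 1) = 0 := by linear_combination hsq1
    have hq : (d:ℝ)*c^2 - 2*c - 1 = 0 :=
      (mul_eq_zero.mp hfac).resolve_left (by intro hcon; linarith)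
    have hsq2 : ((d:ℝ)*c - 1)^2 = t^2 := by linear_combination (d:ℝ)*hq - ht2
    have hfac2 : ((d:ℝ)*c - 1 + t)*((d:ℝ)*c - 1 - t) = 0 := by linear_combination hsq2
    have hdcge : 1 ≤ (d:ℝ)*c := by nlinarith [hxc, hsum1]
    have hc : (d:ℝ)*c = 1 + t := by
      rcases mul_eq_zero.mp hfac2 with h' | h'
      · linarith
      · linarith
    have hcval : c = (1+t)/d := by field_simp; linarith
    have hxval : x = (1+t)/d - t := by
      rw [← hcval]
      linarith [e1, hc]
    funext i
    by_cases hi : (i:ℕ) = 0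
    · rw [if_pos hi]
      have : i = (⟨0, by omega⟩ : Fin d) := Fin.ext hi
      rw [this, ← hxdef, hxval]
    · rw [if_neg hi]
      rw [hall i (by omega), hcval]


private lemma herm_real_smul {n : Type*} [Fintype n] [DecidableEq n] {A : Matrix n n ℂ}
    (hA : A.IsHermitian) (r : ℝ) : (((r : ℝ) : ℂ) • A).IsHermitian := by
  rw [Matrix.IsHermitian, Matrix.conjTranspose_smul, hA.eq]
  norm_num

private lemma expand_sub_sub {n : Type*} [Fintype n] [DecidableEq n]
    (a b a' b' : ℂ) (A B : Matrix n n ℂ) :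
    (a • A - b • (1 : Matrix n n ℂ)) * (a' • B - b' • 1)
      = (a*a') • (A*B) - (a*b') • A - (b*a') • B + (b*b') • (1 : Matrix n n ℂ) := by
  simp only [Matrix.sub_mul, Matrix.mul_sub, Matrix.smul_mul, Matrix.mul_smul,
    Matrix.one_mul, Matrix.mul_one, smul_smul]
  module

private lemma expand_add_add {n : Type*} [Fintype n] [DecidableEq n]
    (a b a' b' : ℂ) (A B : Matrix n n ℂ) :
    (a • A + b • (1 : Matrix n n ℂ)) * (a' • B + b' • 1)
      = (a*a') • (A*B) + (a*b') • A + (b*a') • B + (b*b') • (1 : Matrix n n ℂ) := by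
  simp only [Matrix.add_mul, Matrix.mul_add, Matrix.smul_mul, Matrix.mul_smul,
    Matrix.one_mul, Matrix.mul_one, smul_smul]
  module

section Main

variable {d : ℕ}

/-- Key scalar identity : `c²d - 2c = 1`. -/
private lemma key_scalar (hd : 2 ≤ d) {s c : ℝ} (hs2 : s^2 = (d:ℝ)+1)
    (hsc : (d:ℝ)*c = 1 - s) : c^2*(d:ℝ) - 2*c = 1 := by
  have hd0 : (d:ℝ) ≠ 0 := by positivity
  have h3 : (d:ℝ)*(c^2*(d:ℝ) - 2*c) = (d:ℝ)*1 := by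
    linear_combination ((d:ℝ)*c + 1 - s)*hsc - 2*hsc + hs2
  exact mul_left_cancel₀ hd0 h3

/-- The uniform construction of the SIC from the NQPR. -/
private lemma construct (hd : 2 ≤ d)
    (Q : Fin (d ^ 2) → Matrix (Fin d) (Fin d) ℂ)
    (hherm : ∀ j, (Q j).IsHermitian)
    (htr : ∀ j, (Q j).trace = 1)
    (hpair : ∀ j k, (Q j * Q k).trace = if j = k then (d : ℂ) else 0)
    (s c : ℝ) (hs2 : s^2 = (d:ℝ)+1) (hsc : (d:ℝ)*c = 1 - s) (hs0 : s ≠ 0)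
    (heig : ∀ j i, (hherm j).eigenvalues i = c ∨ (hherm j).eigenvalues i = c + s) :
    ∃ P : Fin (d ^ 2) → Matrix (Fin d) (Fin d) ℂ,
      (∀ j, (P j).IsHermitian) ∧ (∀ j, P j * P j = P j) ∧ (∀ j, (P j).trace = 1) ∧
      (∀ j k, (P j * P k).trace = ((d : ℂ) * (if j = k then 1 else 0) + 1) / ((d : ℂ) + 1)) ∧
      (∀ j, Q j = ((s : ℝ) : ℂ) • P j + ((c : ℝ) : ℂ) • (1 : Matrix (Fin d) (Fin d) ℂ)) := by
  have hd0 : (d:ℝ) ≠ 0 := by positivity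
  have hd0C : (d:ℂ) ≠ 0 := Nat.cast_ne_zero.mpr (by omega)
  have hd1C : (d:ℂ) + 1 ≠ 0 := by
    have : ((d+1 : ℕ) : ℂ) ≠ 0 := Nat.cast_ne_zero.mpr (by omega)
    push_cast at this
    exact this
  set sC : ℂ := ((s : ℝ) : ℂ) with hsCdef
  set cC : ℂ := ((c : ℝ) : ℂ) with hcCdef
  have hsC0 : sC ≠ 0 := Complex.ofReal_ne_zero.mpr hs0
  have hscC : (d:ℂ)*cC = 1 - sC := by
    rw [hsCdef, hcCdef]
    exact_mod_cast congrArg Complex.ofReal hsc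
  have hs2C : sC^2 = (d:ℂ)+1 := by
    rw [hsCdef]
    exact_mod_cast congrArg Complex.ofReal hs2
  have hkeyC : cC^2*(d:ℂ) - 2*cC = 1 := by
    rw [hcCdef]
    exact_mod_cast congrArg Complex.ofReal (key_scalar hd hs2 hsc)
  have hquad : ∀ j, Q j * Q j = ((2*c+s : ℝ) : ℂ) • Q j
      + ((-(c*(c+s)) : ℝ) : ℂ) • (1 : Matrix (Fin d) (Fin d) ℂ) := by
    intro j
    refine quadratic_of_eigen (hherm j) (fun i => ?_)
    rcases heig j i with h | h <;> rw [h] <;> ring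
  refine ⟨fun j => sC⁻¹ • Q j - (sC⁻¹*cC) • 1, fun j => ?_, fun j => ?_, fun j => ?_,
    fun j k => ?_, fun j => ?_⟩
  · -- hermitian
    have h1 : (sC⁻¹ • Q j).IsHermitian := by
      have := herm_real_smul (hherm j) s⁻¹
      simpa [hsCdef] using this
    have h2 : ((sC⁻¹*cC) • (1 : Matrix (Fin d) (Fin d) ℂ)).IsHermitian := by
      have := herm_real_smul (Matrix.isHermitian_one (n := Fin d) (α := ℂ)) (s⁻¹*c)
      simpa [hsCdef, hcCdef] using this
    exact h1.sub h2
  · -- idempotent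
    rw [expand_sub_sub, hquad j]
    have hcast1 : ((2*c+s : ℝ) : ℂ) = 2*cC + sC := by rw [hsCdef, hcCdef]; push_cast; ring
    have hcast2 : ((-(c*(c+s)) : ℝ) : ℂ) = -(cC*(cC+sC)) := by
      rw [hsCdef, hcCdef]; push_cast; ring
    rw [hcast1, hcast2]
    match_scalars
    · field_simp
      ring
    · field_simp
      ring
  · -- trace one
    rw [Matrix.trace_sub, Matrix.trace_smul, Matrix.trace_smul, htr j, Matrix.trace_one]
    simp only [Fintype.card_fin, smul_eq_mul, mul_one]
    field_simp
    linear_combination -hscC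
  · -- pair traces
    rw [expand_sub_sub, Matrix.trace_add, Matrix.trace_sub, Matrix.trace_sub,
      Matrix.trace_smul, Matrix.trace_smul, Matrix.trace_smul, Matrix.trace_smul,
      hpair j k, htr j, htr k, Matrix.trace_one]
    simp only [Fintype.card_fin, smul_eq_mul, mul_one]
    have e1 : sC⁻¹*sC⁻¹ = ((d:ℂ)+1)⁻¹ := by
      rw [← hs2C, sq, mul_inv]
    by_cases hjk : j = k
    · rw [if_pos hjk, if_pos hjk]
      have hmain : sC⁻¹*sC⁻¹*((d:ℂ) - 2*cC + cC^2*(d:ℂ)) = ((d:ℂ)*1+1)/((d:ℂ)+1) := by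
        rw [show (d:ℂ) - 2*cC + cC^2*(d:ℂ) = (d:ℂ)+1 from by linear_combination hkeyC, e1]
        field_simp
      linear_combination hmain
    · rw [if_neg hjk, if_neg hjk]
      have hmain : sC⁻¹*sC⁻¹*((0:ℂ) - 2*cC + cC^2*(d:ℂ)) = ((d:ℂ)*0+1)/((d:ℂ)+1) := by
        rw [show (0:ℂ) - 2*cC + cC^2*(d:ℂ) = 1 from by linear_combination hkeyC, e1]
        field_simp
        ring
      linear_combination hmain
  · -- decomposition
    show Q j = sC • (sC⁻¹ • Q j - (sC⁻¹*cC) • 1) + cC • 1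
    rw [smul_sub, smul_smul, smul_smul, mul_inv_cancel₀ hsC0, one_smul,
      show sC*(sC⁻¹*cC) = cC from by field_simp]
    rw [sub_add_cancel]

/-- Eigenvalues of `s•P + c•1` for a projector `P` with the right traces. -/
private lemma eigen_of_proj (hd : 2 ≤ d) {Q P : Matrix (Fin d) (Fin d) ℂ}
    (hQ : Q.IsHermitian) (htrQ : Q.trace = 1) (hPP : P * P = P)
    {s c : ℝ} (hs0 : s ≠ 0) (hsc : (d:ℝ)*c = 1 - s)
    (hdec : Q = ((s : ℝ) : ℂ) • P + ((c : ℝ) : ℂ) • (1 : Matrix (Fin d) (Fin d) ℂ)) :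
    ∃ i₀, hQ.eigenvalues i₀ = c + s ∧ ∀ i, i ≠ i₀ → hQ.eigenvalues i = c := by
  have hquad : Q * Q = ((2*c+s : ℝ) : ℂ) • Q
      + ((-(c*(c+s)) : ℝ) : ℂ) • (1 : Matrix (Fin d) (Fin d) ℂ) := by
    rw [hdec, expand_add_add, hPP]
    have hcast1 : ((2*c+s : ℝ) : ℂ) = 2*((c:ℝ):ℂ) + ((s:ℝ):ℂ) := by push_cast; ring
    have hcast2 : ((-(c*(c+s)) : ℝ) : ℂ) = -(((c:ℝ):ℂ)*(((c:ℝ):ℂ)+((s:ℝ):ℂ))) := by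
      push_cast; ring
    rw [hcast1, hcast2]
    match_scalars <;> ring
  have heig : ∀ i, hQ.eigenvalues i = c ∨ hQ.eigenvalues i = c + s := by
    intro i
    have h := eigen_quadratic hQ hquad i
    have hfac : (hQ.eigenvalues i - c) * (hQ.eigenvalues i - (c+s)) = 0 := by
      linear_combination h
    rcases mul_eq_zero.mp hfac with h' | h'
    · left; linarith
    · right; linarith
  have hsumQ : ∑ i, hQ.eigenvalues i = 1 := by
    have h1 := trace_eq_sum_eigen hQ
    rw [htrQ] at h1
    have : ((∑ i, hQ.eigenvalues i : ℝ) : ℂ) = ((1:ℝ) : ℂ) := by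
      push_cast
      rw [← h1]
    exact_mod_cast this
  refine unique_outlier hQ.eigenvalues hs0 heig ?_
  rw [hsumQ]
  linarith [hsc]

/-- Value of a pair sum when both vectors have the two–point pattern (outliers at
opposite ends after desc-reversal). -/
private lemma pattern_term_high (hd : 2 ≤ d) (vj vk : Fin d → ℝ) {s c : ℝ}
    (hs2 : s^2 = (d:ℝ)+1) (hsc : (d:ℝ)*c = 1 - s)
    (hj : sortedAsc vj = fun i : Fin d => if (i:ℕ) = d - 1 then c + s else c)
    (hk : sortedAsc vk = fun i : Fin d => if (i:ℕ) = d - 1 then c + s else c) :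
    ∑ i, sortedAsc vj i * sortedDesc vk i = -1 := by
  have hd0 : (d:ℝ) ≠ 0 := by positivity
  set L : Fin d := ⟨d-1, by omega⟩ with hL
  set Z : Fin d := ⟨0, by omega⟩ with hZ
  have hLZ : L ≠ Z := by
    simp only [hL, hZ, ne_eq, Fin.mk.injEq]
    omega
  have hterm : ∀ i : Fin d, sortedAsc vj i * sortedDesc vk i
      = (if i = L then c + s else c) * (if i = Z then c + s else c) := by
    intro i
    have hA : sortedAsc vj i = if i = L then c + s else c := by
      rw [hj]
      simp only
      by_cases h : (i : ℕ) = d - 1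
      · rw [if_pos h, if_pos (Fin.ext h)]
      · rw [if_neg h, if_neg (fun hh => h (congrArg Fin.val hh))]
    have hB : sortedDesc vk i = if i = Z then c + s else c := by
      show sortedAsc vk i.rev = _
      rw [hk]
      simp only
      by_cases h : i = Z
      · rw [if_pos (by subst h; simp [Fin.val_rev, hZ]), if_pos h]
      · have hv : (i:ℕ) ≠ 0 := fun hh => h (Fin.ext hh)
        rw [if_neg (by simp only [Fin.val_rev]; have := i.isLt; omega), if_neg h]
    rw [hA, hB]
  rw [Finset.sum_congr rfl (fun i _ => hterm i), sum_if_pattern L Z hLZ]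
  have hfin : (d:ℝ)*((d:ℝ)*(c*c) + (c+s-c)*c + c*(c+s-c) + 1) = 0 := by
    linear_combination ((d:ℝ)*c + 1 - s)*hsc + 2*s*hsc - hs2
  have := mul_eq_zero.mp hfin
  rcases this with h | h
  · exact absurd h hd0
  · linarith

private lemma pattern_term_low (hd : 2 ≤ d) (vj vk : Fin d → ℝ) {s c : ℝ}
    (hs2 : s^2 = (d:ℝ)+1) (hsc : (d:ℝ)*c = 1 - s)
    (hj : sortedAsc vj = fun i : Fin d => if (i:ℕ) = 0 then c + s else c)
    (hk : sortedAsc vk = fun i : Fin d => if (i:ℕ) = 0 then c + s else c) :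
    ∑ i, sortedAsc vj i * sortedDesc vk i = -1 := by
  have hd0 : (d:ℝ) ≠ 0 := by positivity
  set L : Fin d := ⟨d-1, by omega⟩ with hL
  set Z : Fin d := ⟨0, by omega⟩ with hZ
  have hZL : Z ≠ L := by
    simp only [hL, hZ, ne_eq, Fin.mk.injEq]
    omega
  have hterm : ∀ i : Fin d, sortedAsc vj i * sortedDesc vk i
      = (if i = Z then c + s else c) * (if i = L then c + s else c) := by
    intro i
    have hA : sortedAsc vj i = if i = Z then c + s else c := by
      rw [hj]
      simp only
      by_cases h : (i : ℕ) = 0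
      · rw [if_pos h, if_pos (Fin.ext h)]
      · rw [if_neg h, if_neg (fun hh => h (congrArg Fin.val hh))]
    have hB : sortedDesc vk i = if i = L then c + s else c := by
      show sortedAsc vk i.rev = _
      rw [hk]
      simp only
      by_cases h : i = L
      · rw [if_pos (by subst h; simp only [Fin.val_rev, hL]; omega), if_pos h]
      · have hv : (i:ℕ) ≠ d - 1 := fun hh => h (Fin.ext hh)
        rw [if_neg (by simp only [Fin.val_rev]; have := i.isLt; omega), if_neg h]
    rw [hA, hB]
  rw [Finset.sum_congr rfl (fun i _ => hterm i), sum_if_pattern Z L hZL]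
  have hfin : (d:ℝ)*((d:ℝ)*(c*c) + (c+s-c)*c + c*(c+s-c) + 1) = 0 := by
    linear_combination ((d:ℝ)*c + 1 - s)*hsc + 2*s*hsc - hs2
  have := mul_eq_zero.mp hfin
  rcases this with h | h
  · exact absurd h hd0
  · linarith

end Main

end Diag
end Stmt8

open Stmt8

/-- For an NQPR `Q` in dimension `d ≥ 2`, with `λ_j^↑` (resp. `λ_j^↓`) the
eigenvalues of `Q j` in nondecreasing (resp. nonincreasing) order, one has
`min_{j,k} λ_j^↑ · λ_k^↓ ≤ −1`, with equality iff `Q` arises from a SIC `Π` as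
`Q j = ±√(d+1)·Π j + ((1 ∓ √(d+1))/d)·I` (the same sign for all `j`). -/
theorem stmt_8 (d : ℕ) (hd : 2 ≤ d)
    (Q : Fin (d ^ 2) → Matrix (Fin d) (Fin d) ℂ)
    (hherm : ∀ j, (Q j).IsHermitian)
    (htr : ∀ j, (Q j).trace = 1)
    (hpair : ∀ j k, (Q j * Q k).trace = if j = k then (d : ℂ) else 0)
    (hsum : ∑ j, Q j = (d : ℂ) • (1 : Matrix (Fin d) (Fin d) ℂ)) :
    (⨅ j, ⨅ k, ∑ i, sortedAsc ((hherm j).eigenvalues) i *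
        sortedDesc ((hherm k).eigenvalues) i) ≤ -1 ∧
    ((⨅ j, ⨅ k, ∑ i, sortedAsc ((hherm j).eigenvalues) i *
        sortedDesc ((hherm k).eigenvalues) i) = -1 ↔
      ∃ P : Fin (d ^ 2) → Matrix (Fin d) (Fin d) ℂ,
        (∀ j, (P j).IsHermitian) ∧
        (∀ j, P j * P j = P j) ∧
        (∀ j, (P j).trace = 1) ∧
        (∀ j k, (P j * P k).trace =
          ((d : ℂ) * (if j = k then 1 else 0) + 1) / ((d : ℂ) + 1)) ∧
        ((∀ j, Q j = (Real.sqrt (d + 1) : ℂ) • P j +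
            (((1 - Real.sqrt (d + 1)) / d : ℝ) : ℂ) • (1 : Matrix (Fin d) (Fin d) ℂ)) ∨
         (∀ j, Q j = -((Real.sqrt (d + 1) : ℂ)) • P j +
            (((1 + Real.sqrt (d + 1)) / d : ℝ) : ℂ) • (1 : Matrix (Fin d) (Fin d) ℂ)))) := by
  classical
  have hdR : (2:ℝ) ≤ (d:ℝ) := by exact_mod_cast hd
  have hd0 : (d:ℝ) ≠ 0 := by positivity
  haveI hne : Nonempty (Fin (d^2)) := ⟨⟨0, by positivity⟩⟩
  set t : ℝ := Real.sqrt ((d:ℝ)+1) with htdef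
  have ht2 : t^2 = (d:ℝ)+1 := Real.sq_sqrt (by positivity)
  have ht0 : 0 < t := Real.sqrt_pos.mpr (by positivity)
  have hsumlam : ∀ j, ∑ i, (hherm j).eigenvalues i = 1 := by
    intro j
    have h1 := trace_eq_sum_eigen (hherm j)
    rw [htr j] at h1
    have h2 : ((∑ i, (hherm j).eigenvalues i : ℝ) : ℂ) = ((1:ℝ) : ℂ) := by
      push_cast
      rw [← h1]
    exact_mod_cast h2
  have hsqlam : ∀ j, ∑ i, ((hherm j).eigenvalues i)^2 = (d:ℝ) := by
    intro j
    have h1 := trace_sq_eq_sum_eigen_sq (hherm j)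
    rw [hpair j j, if_pos rfl] at h1
    have h2 : ((∑ i, ((hherm j).eigenvalues i)^2 : ℝ) : ℂ) = ((d:ℝ) : ℂ) := by
      push_cast
      push_cast at h1
      rw [← h1]
    exact_mod_cast h2
  have hbdd1 : ∀ j : Fin (d^2), BddBelow (Set.range fun k : Fin (d^2) =>
      ∑ i, sortedAsc ((hherm j).eigenvalues) i * sortedDesc ((hherm k).eigenvalues) i) :=
    fun j => (Set.finite_range _).bddBelow
  have hbdd2 : BddBelow (Set.range fun j : Fin (d^2) => ⨅ k : Fin (d^2),
      ∑ i, sortedAsc ((hherm j).eigenvalues) i * sortedDesc ((hherm k).eigenvalues) i) :=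
    (Set.finite_range _).bddBelow
  have hdiag : ∀ j, ∑ i, sortedAsc ((hherm j).eigenvalues) i *
      sortedDesc ((hherm j).eigenvalues) i ≤ -1 :=
    fun j => diag_le hd _ (hsumlam j) (hsqlam j)
  have hpart1 : (⨅ j, ⨅ k, ∑ i, sortedAsc ((hherm j).eigenvalues) i *
      sortedDesc ((hherm k).eigenvalues) i) ≤ -1 := by
    obtain ⟨j₀⟩ := hne
    exact le_trans (ciInf_le hbdd2 j₀) (le_trans (ciInf_le (hbdd1 j₀) j₀) (hdiag j₀))
  refine ⟨hpart1, ?_, ?_⟩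
  · -- forward direction
    intro hinf
    have hge : ∀ j k, -1 ≤ ∑ i, sortedAsc ((hherm j).eigenvalues) i *
        sortedDesc ((hherm k).eigenvalues) i := by
      intro j k
      rw [← hinf]
      exact le_trans (ciInf_le hbdd2 j) (ciInf_le (hbdd1 j) k)
    have hdiageq : ∀ j, ∑ i, sortedAsc ((hherm j).eigenvalues) i *
        sortedDesc ((hherm j).eigenvalues) i = -1 :=
      fun j => le_antisymm (hdiag j) (hge j j)
    have hpat := fun j => diag_eq_pattern hd _ (hsumlam j) (hsqlam j) (hdiageq j)
    by_cases hB : ∀ j, sortedAsc ((hherm j).eigenvalues)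
        = fun i : Fin d => if (i:ℕ) = d - 1 then (1 - t)/d + t else (1 - t)/d
    · -- all positive
      set c : ℝ := (1 - t)/d with hcdef
      have hsc : (d:ℝ)*c = 1 - t := by rw [hcdef]; field_simp
      have heig : ∀ j i, (hherm j).eigenvalues i = c ∨ (hherm j).eigenvalues i = c + t := by
        intro j i
        obtain ⟨i', hi'⟩ := exists_sortedAsc_eq ((hherm j).eigenvalues) i
        rw [hB j] at hi'
        simp only at hi'
        by_cases h : (i':ℕ) = d - 1
        · rw [if_pos h] at hi'
          right
          exact hi'
        · rw [if_neg h] at hi'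
          left
          exact hi'
      obtain ⟨P, h1, h2, h3, h4, h5⟩ :=
        construct hd Q hherm htr hpair t c ht2 hsc (ne_of_gt ht0) heig
      exact ⟨P, h1, h2, h3, h4, Or.inl h5⟩
    · -- some j₀ is negative : then all are negative
      push_neg at hB
      obtain ⟨j₀, hj₀B⟩ := hB
      have hj₀ : sortedAsc ((hherm j₀).eigenvalues)
          = fun i : Fin d => if (i:ℕ) = 0 then (1 + t)/d - t else (1 + t)/d :=
        (hpat j₀).resolve_left hj₀B
      have hd3 : 3 ≤ d := by
        by_contra hcon
        have hd2 : d = 2 := by omega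
        apply hj₀B
        rw [hj₀]
        funext i
        subst hd2
        have hiv : (i:ℕ) < 2 := i.isLt
        by_cases h : (i:ℕ) = 0
        · rw [if_pos h, if_neg (by omega)]
          ring
        · rw [if_neg h, if_pos (by omega)]
          ring
      have hd3R : (3:ℝ) ≤ (d:ℝ) := by exact_mod_cast hd3
      have hA : ∀ j, sortedAsc ((hherm j).eigenvalues)
          = fun i : Fin d => if (i:ℕ) = 0 then (1 + t)/d - t else (1 + t)/d := by
        intro j
        rcases hpat j with hBj | hAj
        · exfalso
          set L : Fin d := ⟨d-1, by omega⟩ with hL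
          have hterm : ∀ i : Fin d, sortedAsc ((hherm j).eigenvalues) i *
              sortedDesc ((hherm j₀).eigenvalues) i
              = (if i = L then (1-t)/d + t else (1-t)/d) *
                (if i = L then (1+t)/d - t else (1+t)/d) := by
            intro i
            have hA1 : sortedAsc ((hherm j).eigenvalues) i
                = if i = L then (1-t)/d + t else (1-t)/d := by
              rw [hBj]
              simp only
              by_cases h : (i : ℕ) = d - 1
              · rw [if_pos h, if_pos (Fin.ext h)]
              · rw [if_neg h, if_neg (fun hh => h (congrArg Fin.val hh))]
            have hB1 : sortedDesc ((hherm j₀).eigenvalues) i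
                = if i = L then (1+t)/d - t else (1+t)/d := by
              show sortedAsc ((hherm j₀).eigenvalues) i.rev = _
              rw [hj₀]
              simp only
              by_cases h : i = L
              · rw [if_pos (by subst h; simp only [Fin.val_rev, hL]; omega), if_pos h]
              · have hv : (i:ℕ) ≠ d - 1 := fun hh => h (Fin.ext hh)
                rw [if_neg (by simp only [Fin.val_rev]; have := i.isLt; omega), if_neg h]
            rw [hA1, hB1]
          have hsumval : ∑ i, sortedAsc ((hherm j).eigenvalues) i *
              sortedDesc ((hherm j₀).eigenvalues) i
              = (d:ℝ)*(((1-t)/d) * ((1+t)/d))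
                + (((1-t)/d + t) * ((1+t)/d - t) - ((1-t)/d) * ((1+t)/d)) := by
            rw [Finset.sum_congr rfl (fun i _ => hterm i),
              sum_if_pattern_same L ((1-t)/d + t) ((1-t)/d) ((1+t)/d - t) ((1+t)/d)]
          have hprod1 : ((1-t)/d) * ((1+t)/d) = -(1/(d:ℝ)) := by
            field_simp
            linear_combination (-1:ℝ)*ht2
          have he : ((1-t) + t*(d:ℝ)) * ((1+t) - t*(d:ℝ))
              = 1 - ((d:ℝ)-1)^2*((d:ℝ)+1) := by
            linear_combination (-((d:ℝ)-1)^2)*ht2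
          have hprod2 : ((1-t)/d + t) * ((1+t)/d - t)
              = (1 - ((d:ℝ)-1)^2*((d:ℝ)+1))/(d:ℝ)^2 := by
            rw [← he]
            field_simp
          have hd2pos : (0:ℝ) < (d:ℝ)^2 := by positivity
          have hlt : ∑ i, sortedAsc ((hherm j).eigenvalues) i *
              sortedDesc ((hherm j₀).eigenvalues) i < -1 := by
            rw [hsumval, hprod1, hprod2]
            have hda : (d:ℝ)*(-(1/(d:ℝ))) = -1 := by field_simp
            rw [hda]
            have hnum : 1 - ((d:ℝ)-1)^2*((d:ℝ)+1) + (d:ℝ) < 0 := by nlinarith [hd3R]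
            have heq2 : (1 - ((d:ℝ)-1)^2*((d:ℝ)+1))/(d:ℝ)^2 + 1/(d:ℝ)
                = (1 - ((d:ℝ)-1)^2*((d:ℝ)+1) + (d:ℝ))/(d:ℝ)^2 := by
              field_simp
            have hfrac : (1 - ((d:ℝ)-1)^2*((d:ℝ)+1))/(d:ℝ)^2 + 1/(d:ℝ) < 0 := by
              rw [heq2]
              exact div_neg_of_neg_of_pos hnum hd2pos
            linarith
          exact absurd (hge j j₀) (not_le.mpr hlt)
        · exact hAj
      set c' : ℝ := (1 + t)/d with hc'def
      have hsc' : (d:ℝ)*c' = 1 - (-t) := by rw [hc'def]; field_simp; ring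
      have hs2' : (-t)^2 = (d:ℝ)+1 := by rw [neg_sq]; exact ht2
      have heig : ∀ j i, (hherm j).eigenvalues i = c' ∨ (hherm j).eigenvalues i = c' + -t := by
        intro j i
        obtain ⟨i', hi'⟩ := exists_sortedAsc_eq ((hherm j).eigenvalues) i
        rw [hA j] at hi'
        simp only at hi'
        by_cases h : (i':ℕ) = 0
        · rw [if_pos h] at hi'
          right
          rw [hi']
          ring
        · rw [if_neg h] at hi'
          left
          exact hi'
      obtain ⟨P, h1, h2, h3, h4, h5⟩ :=
        construct hd Q hherm htr hpair (-t) c' hs2' hsc' (neg_ne_zero.mpr (ne_of_gt ht0)) heig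
      refine ⟨P, h1, h2, h3, h4, Or.inr ?_⟩
      intro j
      rw [h5 j, Complex.ofReal_neg]
  · -- backward direction
    rintro ⟨P, hPh, hPP, hPtr, hPpair, hdec | hdec⟩
    · -- positive sign
      set c : ℝ := (1 - t)/d with hcdef
      have hsc : (d:ℝ)*c = 1 - t := by rw [hcdef]; field_simp
      have hj : ∀ j, sortedAsc ((hherm j).eigenvalues)
          = fun i : Fin d => if (i:ℕ) = d - 1 then c + t else c := by
        intro j
        obtain ⟨i₀, hb, hc⟩ := eigen_of_proj hd (hherm j) (htr j) (hPP j)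
          (ne_of_gt ht0) hsc (hdec j)
        exact sortedAsc_pattern_high (by omega) _ (by linarith) i₀ hb hc
      have hval : ∀ j k, ∑ i, sortedAsc ((hherm j).eigenvalues) i *
          sortedDesc ((hherm k).eigenvalues) i = -1 :=
        fun j k => pattern_term_high hd _ _ ht2 hsc (hj j) (hj k)
      simp only [hval, ciInf_const]
    · -- negative sign
      set c' : ℝ := (1 + t)/d with hc'def
      have hsc' : (d:ℝ)*c' = 1 - (-t) := by rw [hc'def]; field_simp; ring
      have hs2' : (-t)^2 = (d:ℝ)+1 := by rw [neg_sq]; exact ht2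
      have hj : ∀ j, sortedAsc ((hherm j).eigenvalues)
          = fun i : Fin d => if (i:ℕ) = 0 then c' + -t else c' := by
        intro j
        have hdec' : Q j = (((-t : ℝ)) : ℂ) • P j + ((c' : ℝ) : ℂ) •
            (1 : Matrix (Fin d) (Fin d) ℂ) := by
          rw [hdec j, Complex.ofReal_neg]
        obtain ⟨i₀, hb, hc⟩ := eigen_of_proj hd (hherm j) (htr j) (hPP j)
          (neg_ne_zero.mpr (ne_of_gt ht0)) hsc' hdec'
        exact sortedAsc_pattern_low (by omega) _ (by linarith) i₀ hb hc
      have hval : ∀ j k, ∑ i, sortedAsc ((hherm j).eigenvalues) i *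
          sortedDesc ((hherm k).eigenvalues) i = -1 :=
        fun j k => pattern_term_low hd _ _ hs2' hsc' (hj j) (hj k)
      simp only [hval, ciInf_const]
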